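/- For every ε > 0 there exists α₀ ∈ (1/2, 1) such that for every α ∈ (α₀, 1), every γ > 1/(2α−1), and every point x = ρ(k₁,k₂,…) ∈ C_∞^γ, one has liminf_{n→∞} log μ_α(I_{k₁⋯k_n}) / log |I_{k₁⋯k_n}| ≥ α − ε. -/

import Mathlib

open Filter MeasureTheory Metric Set Topology

namespace SchmelingStratmann

/-- The (real) Riemann zeta function `ζ(s) = Σ_{n ≥ 1} n^(-s)`. -/
noncomputable def zeta (s : ℝ) : ℝ := ∑' n : ℕ, ((n : ℝ) + 1) ^ (-s)

/-- The constant `c = (2ζ(2))⁻¹ = 3/π²`. -/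
noncomputable def c : ℝ := (2 * zeta 2)⁻¹

/-- The partial sum `Σ_{i=1}^{j} i⁻²`. -/
noncomputable def S (j : ℕ) : ℝ := ∑ i ∈ Finset.range j, (((i : ℝ) + 1) ^ 2)⁻¹

/-- Given the (left endpoint, length) data `a` of a fundamental interval whose word has
last index `k` (the empty word having last index `0`), this is the (left endpoint, length)
data of its child indexed by `m`: the children with `m > k` are placed mutually adjacent
starting from the left endpoint in increasing order of `m`, while for `k ≠ 0` the children
with `m = k, k-1, …, 0` are placed mutually adjacent starting from the right endpoint; the
child `m ≠ k` has length `c ⬝ len ⬝ |m - k|⁻²` and the child `m = k ≠ 0` has length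
`c ⬝ len ⬝ (2k)⁻²`. -/
noncomputable def child (a : ℝ × ℝ) (k m : ℕ) : ℝ × ℝ :=
  if k < m then
    (a.1 + c * a.2 * S (m - k - 1), c * a.2 * (((m : ℝ) - (k : ℝ)) ^ 2)⁻¹)
  else if m < k then
    (a.1 + a.2 - c * a.2 * (((2 * (k : ℝ)) ^ 2)⁻¹ + S (k - m)),
      c * a.2 * (((k : ℝ) - (m : ℝ)) ^ 2)⁻¹)
  else
    (a.1 + a.2 - c * a.2 * ((2 * (k : ℝ)) ^ 2)⁻¹, c * a.2 * ((2 * (k : ℝ)) ^ 2)⁻¹)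

noncomputable def buildAux : ℕ → ℝ × ℝ → List ℕ → ℝ × ℝ
  | _, a, [] => a
  | k, a, m :: w => buildAux m (child a k m) w

/-- The (left endpoint, length) data of the fundamental interval of the word `w`,
starting from `I_∅ = [0,1)`. -/
noncomputable def intData (w : List ℕ) : ℝ × ℝ := buildAux 0 (0, 1) w

/-- The fundamental half-open interval `I_{k₁⋯k_n}` of the word `w = [k₁, …, k_n]`. -/
noncomputable def I (w : List ℕ) : Set ℝ :=
  Set.Ico (intData w).1 ((intData w).1 + (intData w).2)

/-- The diameter (length) `|I_{k₁⋯k_n}|` of a fundamental interval. -/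
noncomputable def len (w : List ℕ) : ℝ := (intData w).2

/-- A finite word `[k₁, …, k_n]` is admissible if `k₁ ≠ 0` and `kᵢ = 0` implies
`k_{i+1} ≠ 0` (with the convention `k₀ = 0`). -/
def Adm (w : List ℕ) : Prop := List.Chain (fun a b => a = 0 → b ≠ 0) 0 w

/-- Admissibility of an infinite sequence (0-based: `k 0` is `k₁`). -/
def AdmSeq (k : ℕ → ℕ) : Prop := k 0 ≠ 0 ∧ ∀ i, k i = 0 → k (i + 1) ≠ 0

/-- The length-`n` prefix `[k₁, …, k_n]` of an infinite sequence. -/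
def pref (k : ℕ → ℕ) (n : ℕ) : List ℕ := (List.range n).map k

/-- The Cantor-like set `C = ⋂_{n ≥ 1} ⋃_{I ∈ C_n} I`. -/
noncomputable def Cset : Set ℝ :=
  ⋂ n : ℕ, ⋃ w ∈ {w : List ℕ | Adm w ∧ w.length = n + 1}, I w

/-- The set `C_∞` of dissipative points: points `ρ(k₁,k₂,…) = ⋂_n cl(I_{k₁⋯k_n})` for
admissible sequences with `k_n → ∞`. -/
noncomputable def Cinf : Set ℝ :=
  {x | ∃ k : ℕ → ℕ, AdmSeq k ∧ Tendsto k atTop atTop ∧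
    ∀ n, x ∈ closure (I (pref k n))}

/-- The set `C_∞^γ` of dissipative points whose coding satisfies
`limsup_n |k_{n+1} - k_n| / n^γ ≤ 1`. -/
noncomputable def CinfGamma (γ : ℝ) : Set ℝ :=
  {x | ∃ k : ℕ → ℕ, AdmSeq k ∧ Tendsto k atTop atTop ∧
    limsup (fun n : ℕ => |((k (n + 1) : ℝ)) - (k n : ℝ)| / ((n + 1 : ℝ)) ^ γ) atTop ≤ 1 ∧
    ∀ n, x ∈ closure (I (pref k n))}

/-- The transition weights `p_α(k, m)` on `ℕ₀`. -/
noncomputable def p (α : ℝ) (k m : ℕ) : ℝ :=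
  if m = k then (if k = 0 then 0 else (2 * zeta (2 * α))⁻¹ * (2 * (k : ℝ)) ^ (-(2 * α)))
  else if m = 0 then (2 * zeta (2 * α))⁻¹ * (k : ℝ) ^ (-(2 * α))
  else (2 * zeta (2 * α))⁻¹ *
    (|(m : ℝ) - (k : ℝ)| ^ (-(2 * α)) + ((m : ℝ) + (k : ℝ)) ^ (-(2 * α)))

noncomputable def muAux (α : ℝ) : ℕ → List ℕ → ℝ
  | _, [] => 1
  | k, m :: w => p α k m * muAux α m w

/-- The set function `μ_α` on fundamental intervals:
`μ_α(I_{k₁⋯k_n}) = Π_{i=0}^{n-1} p_α(k_i, k_{i+1})` with `k₀ = 0`. -/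
noncomputable def mu (α : ℝ) (w : List ℕ) : ℝ := muAux α 0 w

/-- The increment distribution of the Cauchy-type random walk:
`P(increment = l) = (2ζ(β))⁻¹ |l|^(-β)` for `l ≠ 0`. -/
noncomputable def q (β : ℝ) (l : ℤ) : ℝ :=
  if l = 0 then 0 else (2 * zeta β)⁻¹ * |(l : ℝ)| ^ (-β)


/-! ### Auxiliary lemmas -/

lemma summable_zeta {s : ℝ} (hs : 1 < s) : Summable (fun n : ℕ => ((n : ℝ) + 1) ^ (-s)) := by
  have h : Summable (fun n : ℕ => (n : ℝ) ^ (-s)) := Real.summable_nat_rpow.2 (by linarith)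
  have h2 := (summable_nat_add_iff 1).2 h
  exact h2.congr fun n => by push_cast; ring_nf

lemma one_le_zeta {s : ℝ} (hs : 1 < s) : 1 ≤ zeta s := by
  have h := summable_zeta hs
  have h0 : ((0:ℕ):ℝ) + 1 = 1 := by norm_num
  have := Summable.le_tsum h 0 (fun j _ => Real.rpow_nonneg (by positivity) _)
  rw [h0, Real.one_rpow] at this
  exact this

lemma zeta_pos {s : ℝ} (hs : 1 < s) : 0 < zeta s := lt_of_lt_of_le one_pos (one_le_zeta hs)

lemma zeta_anti {s t : ℝ} (hs : 1 < s) (hst : s ≤ t) : zeta t ≤ zeta s := by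
  refine Summable.tsum_le_tsum (fun n => ?_) (summable_zeta (lt_of_lt_of_le hs hst)) (summable_zeta hs)
  have hn : (0:ℝ) ≤ (n:ℝ) := Nat.cast_nonneg n
  exact Real.rpow_le_rpow_of_exponent_le (by linarith) (by linarith)

lemma zeta_two_lb : (205/144 : ℝ) ≤ zeta 2 := by
  have h := Summable.sum_le_tsum (Finset.range 4)
    (fun i _ => Real.rpow_nonneg (by positivity) _) (summable_zeta (s:=2) (by norm_num))
  refine le_trans (le_of_eq ?_) h
  rw [Finset.sum_range_succ, Finset.sum_range_succ, Finset.sum_range_succ,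
    Finset.sum_range_one]
  have conv : ∀ x : ℝ, 0 < x → x ^ (-(2:ℝ)) = (x^(2:ℕ))⁻¹ := by
    intro x hx
    rw [show (-(2:ℝ)) = ((-2 : ℤ) : ℝ) by norm_num, Real.rpow_intCast]
    simp [zpow_neg]
  rw [conv _ (by norm_num), conv _ (by norm_num), conv _ (by norm_num), conv _ (by norm_num)]
  norm_num

lemma Z1_pos : (0:ℝ) < 2 * zeta 2 := by
  linarith [zeta_pos (by norm_num : (1:ℝ) < 2)]

lemma one_le_log_Z1 : 1 ≤ Real.log (2 * zeta 2) := by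
  rw [Real.le_log_iff_exp_le Z1_pos]
  have h1 := Real.exp_one_lt_d9
  have h2 := zeta_two_lb
  linarith

lemma log_c_eq : Real.log c = - Real.log (2 * zeta 2) := by
  rw [c, Real.log_inv]

/-! ### Structural lemmas -/

lemma getLastD_cons (x j : ℕ) (xs : List ℕ) : (x :: xs).getLastD j = xs.getLastD x := by
  cases xs <;> simp [List.getLastD]

lemma buildAux_append (j : ℕ) (a : ℝ × ℝ) (w : List ℕ) (m : ℕ) :
    buildAux j a (w ++ [m]) = child (buildAux j a w) (w.getLastD j) m := by
  induction w generalizing j a with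
  | nil => simp [buildAux]
  | cons x xs ih =>
    rw [List.cons_append]
    show buildAux x (child a j x) (xs ++ [m]) =
      child (buildAux x (child a j x) xs) ((x :: xs).getLastD j) m
    rw [ih, getLastD_cons]

lemma muAux_append (α : ℝ) (j : ℕ) (w : List ℕ) (m : ℕ) :
    muAux α j (w ++ [m]) = muAux α j w * p α (w.getLastD j) m := by
  induction w generalizing j with
  | nil => simp [muAux]
  | cons x xs ih =>
    rw [List.cons_append]
    show p α j x * muAux α x (xs ++ [m]) =
      (p α j x * muAux α x xs) * p α ((x :: xs).getLastD j) m
    rw [ih, getLastD_cons, mul_assoc]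

lemma pref_succ (k : ℕ → ℕ) (n : ℕ) : pref k (n + 1) = pref k n ++ [k n] := by
  simp [pref, List.range_succ]

/-- The previous index: `Kp k 0 = 0` and `Kp k (n+1) = k n`. -/
def Kp (k : ℕ → ℕ) : ℕ → ℕ
  | 0 => 0
  | n + 1 => k n

lemma getLastD_pref (k : ℕ → ℕ) (n : ℕ) : (pref k n).getLastD 0 = Kp k n := by
  cases n with
  | zero => rfl
  | succ m => rw [pref_succ]; simp [Kp]

/-- The effective jump size of a transition. -/
noncomputable def Aof (K m : ℕ) : ℝ :=
  if m = K then 2 * (K : ℝ) else |(m : ℝ) - (K : ℝ)|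

/-- The relative correction term of a transition. -/
noncomputable def Tof (α : ℝ) (K m : ℕ) : ℝ :=
  if m = K ∨ m = 0 then 0 else (Aof K m / ((m : ℝ) + (K : ℝ))) ^ (2 * α)

lemma one_le_Aof {K m : ℕ} (hm : ¬(m = 0 ∧ K = 0)) : 1 ≤ Aof K m := by
  unfold Aof
  split_ifs with h
  · have hK : K ≠ 0 := by rintro rfl; exact hm ⟨h, rfl⟩
    have : 1 ≤ (K:ℝ) := by exact_mod_cast Nat.one_le_iff_ne_zero.2 hK
    linarith
  · have h1 : ((m:ℤ) - (K:ℤ)) ≠ 0 := by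
      intro h2; apply h; exact_mod_cast sub_eq_zero.1 h2
    have := Int.one_le_abs h1
    have h3 : ((1:ℤ):ℝ) ≤ ((|(m:ℤ) - (K:ℤ)|:ℤ):ℝ) := by exact_mod_cast this
    rw [Int.cast_abs] at h3
    push_cast at h3 ⊢
    exact h3

lemma Aof_pos {K m : ℕ} (hm : ¬(m = 0 ∧ K = 0)) : 0 < Aof K m :=
  lt_of_lt_of_le one_pos (one_le_Aof hm)

lemma Aof_nonneg (K m : ℕ) : 0 ≤ Aof K m := by
  unfold Aof; split_ifs
  · positivity
  · exact abs_nonneg _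

lemma Tof_nonneg (α : ℝ) (K m : ℕ) : 0 ≤ Tof α K m := by
  unfold Tof
  split_ifs with h
  · exact le_refl _
  · exact Real.rpow_nonneg (div_nonneg (Aof_nonneg K m) (by positivity)) _

lemma abs_sub_le_add (m K : ℕ) : |(m:ℝ) - (K:ℝ)| ≤ (m:ℝ) + (K:ℝ) := by
  have h1 : (0:ℝ) ≤ (m:ℝ) := Nat.cast_nonneg m
  have h2 : (0:ℝ) ≤ (K:ℝ) := Nat.cast_nonneg K
  rw [abs_sub_le_iff]; constructor <;> linarith

lemma Aof_le_sum {K m : ℕ} (h : ¬ m = K) : Aof K m ≤ (m:ℝ) + (K:ℝ) := by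
  unfold Aof; rw [if_neg h]; exact abs_sub_le_add m K

lemma Tof_le_one {α : ℝ} (hα : 0 ≤ α) (K m : ℕ) : Tof α K m ≤ 1 := by
  unfold Tof
  split_ifs with h
  · norm_num
  · push_neg at h
    have hs : (0:ℝ) < (m:ℝ) + (K:ℝ) := by
      have : 0 < m := Nat.pos_of_ne_zero h.2
      have : (1:ℝ) ≤ (m:ℝ) := by exact_mod_cast this
      have h2 : (0:ℝ) ≤ (K:ℝ) := Nat.cast_nonneg K
      linarith
    refine Real.rpow_le_one (div_nonneg (Aof_nonneg K m) hs.le) ?_ (by linarith)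
    rw [div_le_one hs]
    exact Aof_le_sum h.1

lemma Tof_mul_le {α : ℝ} (hα : 1 ≤ 2 * α) {K m : ℕ} (hm : ¬(m = 0 ∧ K = 0)) :
    Tof α K m * ((m:ℝ) + (K:ℝ)) ≤ Aof K m := by
  unfold Tof
  split_ifs with h
  · rw [zero_mul]; exact (Aof_nonneg K m)
  · push_neg at h
    have hs : (0:ℝ) < (m:ℝ) + (K:ℝ) := by
      have : 0 < m := Nat.pos_of_ne_zero h.2
      have : (1:ℝ) ≤ (m:ℝ) := by exact_mod_cast this
      have h2 : (0:ℝ) ≤ (K:ℝ) := Nat.cast_nonneg K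
      linarith
    have hA : 0 < Aof K m := Aof_pos hm
    have hd : 0 < Aof K m / ((m:ℝ) + (K:ℝ)) := div_pos hA hs
    have hd1 : Aof K m / ((m:ℝ) + (K:ℝ)) ≤ 1 := by
      rw [div_le_one hs]; exact Aof_le_sum h.1
    have := Real.rpow_le_rpow_of_exponent_ge hd hd1 hα
    rw [Real.rpow_one] at this
    calc (Aof K m / ((m:ℝ) + (K:ℝ))) ^ (2*α) * ((m:ℝ) + (K:ℝ))
        ≤ (Aof K m / ((m:ℝ) + (K:ℝ))) * ((m:ℝ) + (K:ℝ)) := by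
          exact mul_le_mul_of_nonneg_right this hs.le
      _ = Aof K m := by field_simp

lemma p_eq {α : ℝ} {K m : ℕ} (hm : ¬(m = 0 ∧ K = 0)) :
    p α K m = (2 * zeta (2*α))⁻¹ * Aof K m ^ (-(2*α)) * (1 + Tof α K m) := by
  unfold p Tof
  by_cases h1 : m = K
  · have hK : K ≠ 0 := by rintro rfl; exact hm ⟨h1, rfl⟩
    have hA : Aof K m = 2 * (K:ℝ) := if_pos h1
    rw [if_pos h1, if_neg hK, if_pos (Or.inl h1), hA]
    ring
  · have hA : Aof K m = |(m:ℝ) - (K:ℝ)| := if_neg h1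
    rw [if_neg h1]
    by_cases h2 : m = 0
    · have hK : K ≠ 0 := fun hK => hm ⟨h2, hK⟩
      rw [if_pos h2, if_pos (Or.inr h2), hA]
      subst h2
      have h0 : |(0:ℝ) - (K:ℝ)| = (K:ℝ) := by
        rw [zero_sub, abs_neg, abs_of_nonneg (Nat.cast_nonneg K)]
      push_cast
      rw [h0]
      ring
    · rw [if_neg h2, if_neg (by tauto), hA]
      have hx : (0:ℝ) < |(m:ℝ) - (K:ℝ)| := by
        rw [abs_pos, sub_ne_zero]
        exact_mod_cast fun h => h1 (by exact_mod_cast h)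
      have hs : (0:ℝ) < (m:ℝ) + (K:ℝ) := by
        have : 0 < m := Nat.pos_of_ne_zero h2
        have : (1:ℝ) ≤ (m:ℝ) := by exact_mod_cast this
        have hK2 : (0:ℝ) ≤ (K:ℝ) := Nat.cast_nonneg K
        linarith
      have key : |(m:ℝ) - (K:ℝ)| ^ (-(2*α)) *
          (|(m:ℝ) - (K:ℝ)| / ((m:ℝ) + (K:ℝ))) ^ (2*α) = ((m:ℝ) + (K:ℝ)) ^ (-(2*α)) := by
        rw [Real.div_rpow hx.le hs.le, Real.rpow_neg hx.le, Real.rpow_neg hs.le]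
        have h3 : |(m:ℝ) - (K:ℝ)| ^ (2*α) ≠ 0 := (Real.rpow_pos_of_pos hx _).ne'
        field_simp
      calc (2 * zeta (2*α))⁻¹ * (|(m:ℝ) - (K:ℝ)| ^ (-(2*α)) + ((m:ℝ) + (K:ℝ)) ^ (-(2*α)))
          = (2 * zeta (2*α))⁻¹ * (|(m:ℝ) - (K:ℝ)| ^ (-(2*α)) +
            |(m:ℝ) - (K:ℝ)| ^ (-(2*α)) * (|(m:ℝ) - (K:ℝ)| / ((m:ℝ) + (K:ℝ))) ^ (2*α)) := by
            rw [key]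
        _ = _ := by ring

lemma p_pos {α : ℝ} (hα : 1/2 < α) {K m : ℕ} (hm : ¬(m = 0 ∧ K = 0)) :
    0 < p α K m := by
  rw [p_eq hm]
  have h1 : 0 < zeta (2*α) := zeta_pos (by linarith)
  have h2 : 0 < Aof K m := Aof_pos hm
  have h3 : 0 ≤ Tof α K m := Tof_nonneg α K m
  have h4 : 0 < Aof K m ^ (-(2*α)) := Real.rpow_pos_of_pos h2 _
  have h5 : (0:ℝ) < (2 * zeta (2*α))⁻¹ := by positivity
  have h6 : (0:ℝ) < 1 + Tof α K m := by linarith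
  exact mul_pos (mul_pos h5 h4) h6

/-! ### The fundamental sequences along an admissible word -/

lemma len_succ (k : ℕ → ℕ) (n : ℕ) :
    len (pref k (n+1)) = c * len (pref k n) * ((Aof (Kp k n) (k n))^2)⁻¹ := by
  have h : len (pref k (n+1)) =
      (child (intData (pref k n)) (Kp k n) (k n)).2 := by
    unfold len intData
    rw [pref_succ, buildAux_append, getLastD_pref]
  rw [h]
  unfold child Aof
  rcases lt_trichotomy (Kp k n) (k n) with hlt | heq | hgt
  · rw [if_pos hlt, if_neg (by omega : ¬ k n = Kp k n)]
    simp only []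
    rw [sq_abs]
    rfl
  · rw [if_neg (by omega), if_neg (by omega), if_pos (by omega : k n = Kp k n)]
    simp only []
    rw [heq]
    rfl
  · rw [if_neg (by omega), if_pos hgt, if_neg (by omega : ¬ k n = Kp k n)]
    simp only []
    rw [← sq_abs, abs_sub_comm]
    rfl

lemma mu_succ (α : ℝ) (k : ℕ → ℕ) (n : ℕ) :
    mu α (pref k (n+1)) = mu α (pref k n) * p α (Kp k n) (k n) := by
  unfold mu
  rw [pref_succ, muAux_append, getLastD_pref]

lemma pref_zero (k : ℕ → ℕ) : pref k 0 = [] := by simp [pref]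

lemma len_prod (k : ℕ → ℕ) (n : ℕ) :
    len (pref k n) = ∏ i ∈ Finset.range n, (c * ((Aof (Kp k i) (k i))^2)⁻¹) := by
  induction n with
  | zero => rw [pref_zero]; simp [len, intData, buildAux]
  | succ n ih => rw [len_succ, ih, Finset.prod_range_succ]; ring

lemma mu_prod (α : ℝ) (k : ℕ → ℕ) (n : ℕ) :
    mu α (pref k n) = ∏ i ∈ Finset.range n, p α (Kp k i) (k i) := by
  induction n with
  | zero => rw [pref_zero]; rfl
  | succ n ih => rw [mu_succ, ih, Finset.prod_range_succ]

lemma c_pos : (0:ℝ) < c := by rw [c]; exact inv_pos.2 Z1_pos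

/-- Minus the logarithm of the `n`-th transition weight. -/
noncomputable def useq (α : ℝ) (k : ℕ → ℕ) (n : ℕ) : ℝ :=
  Real.log (2 * zeta (2*α)) + 2*α * Real.log (Aof (Kp k n) (k n))
    - Real.log (1 + Tof α (Kp k n) (k n))

/-- Minus the logarithm of the `n`-th length contraction factor. -/
noncomputable def vseq (k : ℕ → ℕ) (n : ℕ) : ℝ :=
  Real.log (2 * zeta 2) + 2 * Real.log (Aof (Kp k n) (k n))

lemma vseq_pos {k : ℕ → ℕ} (hadm' : ∀ n, ¬(k n = 0 ∧ Kp k n = 0)) (n : ℕ) :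
    0 < vseq k n := by
  unfold vseq
  have h1 := Real.log_nonneg (one_le_Aof (hadm' n))
  have h2 := one_le_log_Z1
  linarith

lemma log_len_eq {k : ℕ → ℕ} (hadm' : ∀ n, ¬(k n = 0 ∧ Kp k n = 0)) (n : ℕ) :
    Real.log (len (pref k n)) = - ∑ i ∈ Finset.range n, vseq k i := by
  rw [len_prod]
  have hne : ∀ i ∈ Finset.range n, c * ((Aof (Kp k i) (k i))^2)⁻¹ ≠ 0 := by
    intro i _
    have hA := Aof_pos (hadm' i)
    have hc := c_pos
    positivity
  rw [Real.log_prod hne, ← Finset.sum_neg_distrib]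
  refine Finset.sum_congr rfl (fun i _ => ?_)
  have hA := Aof_pos (hadm' i)
  rw [Real.log_mul c_pos.ne' (by positivity), log_c_eq, Real.log_inv, Real.log_pow]
  unfold vseq
  push_cast
  ring

lemma log_mu_eq {α : ℝ} (hα : 1/2 < α) {k : ℕ → ℕ}
    (hadm' : ∀ n, ¬(k n = 0 ∧ Kp k n = 0)) (n : ℕ) :
    Real.log (mu α (pref k n)) = - ∑ i ∈ Finset.range n, useq α k i := by
  rw [mu_prod, Real.log_prod (fun i _ => (p_pos hα (hadm' i)).ne'),
    ← Finset.sum_neg_distrib]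
  refine Finset.sum_congr rfl (fun i _ => ?_)
  have hA := Aof_pos (hadm' i)
  have ht := Tof_nonneg α (Kp k i) (k i)
  have hZ : (0:ℝ) < 2 * zeta (2*α) := by
    have := zeta_pos (show (1:ℝ) < 2*α by linarith); linarith
  rw [p_eq (hadm' i),
    Real.log_mul (by positivity) (by linarith : (1:ℝ) + Tof α (Kp k i) (k i) ≠ 0)]
  rw [Real.log_mul (by positivity) (Real.rpow_pos_of_pos hA _).ne',
    Real.log_inv, Real.log_rpow hA]
  unfold useq
  ring

/-- The key per-step estimate. -/
lemma step_bound {α ε₁ : ℝ} (hα1 : 3/4 < α) (hα2 : α < 1)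
    (hε₁pos : 0 < ε₁) (hε₁le1 : ε₁ ≤ 1) {k : ℕ → ℕ} {n : ℕ}
    (hmK : ¬(k n = 0 ∧ Kp k n = 0))
    (hKp : Real.exp (1/ε₁) / ε₁ ≤ (Kp k n : ℝ)) :
    (1 - α) * Real.log (2 * zeta 2) ≤ useq α k n - (α - ε₁) * vseq k n := by
  have h2α : (1:ℝ) < 2 * α := by linarith
  have hZ1pos := Z1_pos
  have hZpos : (0:ℝ) < 2 * zeta (2*α) := by
    have := zeta_pos h2α; linarith
  have hZZ1 : 2 * zeta 2 ≤ 2 * zeta (2*α) := by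
    have := zeta_anti (t := 2) h2α (by linarith); linarith
  have hlogZ1 := one_le_log_Z1
  have hlogZZ1 : Real.log (2 * zeta 2) ≤ Real.log (2 * zeta (2*α)) :=
    Real.log_le_log hZ1pos hZZ1
  set a := Aof (Kp k n) (k n) with hadef
  set t := Tof α (Kp k n) (k n) with htdef
  have ha1 : 1 ≤ a := one_le_Aof hmK
  have hapos : 0 < a := by linarith
  have hloga : 0 ≤ Real.log a := Real.log_nonneg ha1
  have htnn : 0 ≤ t := Tof_nonneg α _ _
  have htle1 : t ≤ 1 := Tof_le_one (by linarith) _ _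
  have hlt : Real.log (1 + t) ≤ t := by
    have := Real.log_le_sub_one_of_pos (show (0:ℝ) < 1 + t by linarith)
    linarith
  have key : Real.log (1 + t) ≤ ε₁ * Real.log (2 * zeta 2) + 2*ε₁*Real.log a := by
    rcases le_or_gt t ε₁ with hc | hc
    · have h1 : 0 ≤ 2*ε₁*Real.log a := by positivity
      have h2 : ε₁ ≤ ε₁ * Real.log (2 * zeta 2) :=
        le_mul_of_one_le_right hε₁pos.le hlogZ1
      linarith
    · have hts := Tof_mul_le (show (1:ℝ) ≤ 2*α by linarith) hmK
      have hKnn : (0:ℝ) ≤ (Kp k n : ℝ) := Nat.cast_nonneg _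
      have hmnn : (0:ℝ) ≤ (k n : ℝ) := Nat.cast_nonneg _
      have h1 : ε₁ * (Kp k n : ℝ) ≤ a := by
        calc ε₁ * (Kp k n : ℝ) ≤ t * (Kp k n : ℝ) :=
              mul_le_mul_of_nonneg_right hc.le hKnn
          _ ≤ t * ((k n : ℝ) + (Kp k n : ℝ)) := by nlinarith
          _ ≤ a := hts
      have h2 : Real.exp (1/ε₁) ≤ a := by
        have he : Real.exp (1/ε₁) = ε₁ * (Real.exp (1/ε₁)/ε₁) := by
          field_simp
        rw [he]
        exact le_trans (mul_le_mul_of_nonneg_left hKp hε₁pos.le) h1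
      have h3 : 1/ε₁ ≤ Real.log a := (Real.le_log_iff_exp_le hapos).2 h2
      have h4 : 2 ≤ 2*ε₁*Real.log a := by
        have := mul_le_mul_of_nonneg_left h3 (show (0:ℝ) ≤ 2*ε₁ by linarith)
        have he : 2*ε₁*(1/ε₁) = 2 := by field_simp
        linarith [he ▸ this]
      have h5 : Real.log (1 + t) ≤ 1 := by linarith
      have h6 : 0 ≤ ε₁ * Real.log (2 * zeta 2) := by positivity
      linarith
  have expand : useq α k n - (α - ε₁) * vseq k n =
      (Real.log (2 * zeta (2*α)) - α * Real.log (2 * zeta 2))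
      + (ε₁ * Real.log (2 * zeta 2) + 2*ε₁*Real.log a - Real.log (1 + t)) := by
    unfold useq vseq
    rw [← hadef, ← htdef]
    ring
  rw [expand]
  nlinarith [key, hlogZZ1, hlogZ1]


/-- for every `ε > 0` there is `α₀ ∈ (1/2, 1)` such that for every
`α ∈ (α₀, 1)`, every `γ > 1/(2α-1)` and every point `x = ρ(k₁,k₂,…) ∈ C_∞^γ`,
`liminf_n log μ_α(I_{k₁⋯k_n}) / log |I_{k₁⋯k_n}| ≥ α - ε`. -/
theorem liminf_log_ratio (ε : ℝ) (hε : 0 < ε) :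
    ∃ α₀ : ℝ, α₀ ∈ Set.Ioo (1 / 2 : ℝ) 1 ∧
      ∀ α : ℝ, α ∈ Set.Ioo α₀ 1 → ∀ γ : ℝ, 1 / (2 * α - 1) < γ →
      ∀ k : ℕ → ℕ, AdmSeq k → Tendsto k atTop atTop →
        limsup (fun n : ℕ =>
            |((k (n + 1) : ℝ)) - (k n : ℝ)| / ((n + 1 : ℝ)) ^ γ) atTop ≤ 1 →
        α - ε ≤ liminf (fun n : ℕ =>
          Real.log (mu α (pref k n)) / Real.log (len (pref k n))) atTop := by
  refine ⟨3/4, ⟨by norm_num, by norm_num⟩, ?_⟩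
  rintro α ⟨hα1, hα2⟩ γ _hγ k hadm hk _hlim
  -- basic constants
  set ε₁ : ℝ := min ε 1 with hε₁def
  have hε₁pos : 0 < ε₁ := lt_min hε one_pos
  have hε₁le1 : ε₁ ≤ 1 := min_le_right _ _
  have hε₁leε : ε₁ ≤ ε := min_le_left _ _
  have h2α : (1:ℝ) < 2 * α := by linarith
  have hZ1pos := Z1_pos
  have hZpos : (0:ℝ) < 2 * zeta (2*α) := by
    have := zeta_pos h2α; linarith
  have hlogZ1 := one_le_log_Z1
  have hα12 : (1:ℝ)/2 < α := by linarith
  -- admissibility of all steps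
  have hadm' : ∀ n, ¬(k n = 0 ∧ Kp k n = 0) := by
    rintro n ⟨h1, h2⟩
    cases n with
    | zero => exact hadm.1 h1
    | succ m => exact hadm.2 m h2 h1
  -- eventually the previous index is large
  have hev := hk.eventually_ge_atTop ⌈Real.exp (1/ε₁) / ε₁⌉₊
  rw [eventually_atTop] at hev
  obtain ⟨N0, hN0⟩ := hev
  set N := N0 + 1 with hNdef
  have hKpN : ∀ n, N ≤ n → Real.exp (1/ε₁)/ε₁ ≤ (Kp k n : ℝ) := by
    intro n hn
    obtain ⟨m, rfl⟩ : ∃ m, n = m + 1 := ⟨n - 1, by omega⟩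
    have hm : N0 ≤ m := by omega
    have h1 := hN0 m hm
    have h2 : (⌈Real.exp (1/ε₁) / ε₁⌉₊ : ℝ) ≤ (k m : ℝ) := by exact_mod_cast h1
    calc Real.exp (1/ε₁)/ε₁ ≤ (⌈Real.exp (1/ε₁) / ε₁⌉₊ : ℝ) := Nat.le_ceil _
      _ ≤ (k m : ℝ) := h2
  have hstep : ∀ n, N ≤ n →
      (1-α) * Real.log (2 * zeta 2) ≤ useq α k n - (α - ε₁) * vseq k n :=
    fun n hn => step_bound hα1 hα2 hε₁pos hε₁le1 (hadm' n) (hKpN n hn)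
  set δ : ℝ := (1-α) * Real.log (2 * zeta 2) with hδdef
  have hδpos : 0 < δ := mul_pos (by linarith) (by linarith)
  set B : ℝ := ∑ i ∈ Finset.range N, (useq α k i - (α - ε₁) * vseq k i) with hBdef
  have growth : ∀ n, N ≤ n → B + ((n - N : ℕ):ℝ) * δ ≤
      ∑ i ∈ Finset.range n, (useq α k i - (α - ε₁) * vseq k i) := by
    intro n hn
    induction n, hn using Nat.le_induction with
    | base =>
      have h0 : ((N - N : ℕ):ℝ) = 0 := by simp
      rw [h0, zero_mul, add_zero]
    | succ n hn ih =>
      rw [Finset.sum_range_succ]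
      have h1 := hstep n (by omega)
      have h2 : ((n + 1 - N : ℕ):ℝ) = ((n - N : ℕ):ℝ) + 1 := by
        have h3 : n + 1 - N = (n - N) + 1 := by omega
        rw [h3]; push_cast; ring
      rw [h2]
      have h4 : (((n - N : ℕ):ℝ) + 1) * δ = ((n - N : ℕ):ℝ) * δ + δ := by ring
      linarith
  -- choose the final threshold
  obtain ⟨N₂, hN₂N, hN₂pos, hN₂B⟩ :
      ∃ N₂, N ≤ N₂ ∧ 1 ≤ N₂ ∧ 0 ≤ B + ((N₂ - N : ℕ):ℝ) * δ := by
    refine ⟨N + 1 + ⌈|B|/δ⌉₊, by omega, by omega, ?_⟩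
    have h1 : (N + 1 + ⌈|B|/δ⌉₊ - N : ℕ) = 1 + ⌈|B|/δ⌉₊ := by omega
    rw [h1]
    have h2 : |B|/δ ≤ ((1 + ⌈|B|/δ⌉₊ : ℕ):ℝ) := by
      push_cast; linarith [Nat.le_ceil (|B|/δ)]
    have h3 : |B| ≤ ((1 + ⌈|B|/δ⌉₊ : ℕ):ℝ) * δ := by
      rw [div_le_iff₀ hδpos] at h2; linarith
    linarith [neg_abs_le B]
  have hVpos : ∀ n, 1 ≤ n → 0 < ∑ i ∈ Finset.range n, vseq k i := by
    intro n hn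
    refine Finset.sum_pos (fun i _ => vseq_pos hadm' i) ?_
    exact ⟨0, Finset.mem_range.2 (by omega)⟩
  have hUVsub : ∀ n, ∑ i ∈ Finset.range n, (useq α k i - (α - ε₁) * vseq k i) =
      (∑ i ∈ Finset.range n, useq α k i) -
        (α - ε₁) * ∑ i ∈ Finset.range n, vseq k i := by
    intro n
    rw [Finset.sum_sub_distrib, Finset.mul_sum]
  -- the eventual lower bound
  have hfbound : ∀ n, N₂ ≤ n →
      (α - ε₁) ≤ Real.log (mu α (pref k n)) / Real.log (len (pref k n)) := by
    intro n hn
    have hsum : 0 ≤ ∑ i ∈ Finset.range n, (useq α k i - (α - ε₁) * vseq k i) := by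
      have g := growth n (le_trans hN₂N hn)
      have mono : ((N₂ - N : ℕ):ℝ) * δ ≤ ((n - N : ℕ):ℝ) * δ := by
        have : ((N₂ - N : ℕ):ℝ) ≤ ((n - N : ℕ):ℝ) := by
          exact_mod_cast (by omega : N₂ - N ≤ n - N)
        exact mul_le_mul_of_nonneg_right this hδpos.le
      linarith
    rw [hUVsub n] at hsum
    have hV := hVpos n (le_trans hN₂pos hn)
    rw [log_mu_eq hα12 hadm' n, log_len_eq hadm' n, neg_div_neg_eq,
      le_div_iff₀ hV]
    linarith
  -- the eventual upper bound (for coboundedness)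
  set C : ℝ := max 1 (Real.log (2 * zeta (2*α))) with hCdef
  have hC1 : 1 ≤ C := le_max_left _ _
  have hClogZ : Real.log (2 * zeta (2*α)) ≤ C := le_max_right _ _
  have hu_le : ∀ i, useq α k i ≤ C * vseq k i := by
    intro i
    unfold useq vseq
    have hA1 := one_le_Aof (hadm' i)
    have hloga : 0 ≤ Real.log (Aof (Kp k i) (k i)) := Real.log_nonneg hA1
    have ht := Tof_nonneg α (Kp k i) (k i)
    have hl1t : 0 ≤ Real.log (1 + Tof α (Kp k i) (k i)) :=
      Real.log_nonneg (by linarith)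
    have l1 : Real.log (2 * zeta (2*α)) ≤ C * Real.log (2 * zeta 2) := by
      calc Real.log (2 * zeta (2*α)) ≤ C := hClogZ
        _ ≤ C * Real.log (2 * zeta 2) :=
          le_mul_of_one_le_right (by linarith) hlogZ1
    have l2 : 2*α * Real.log (Aof (Kp k i) (k i)) ≤
        C * (2 * Real.log (Aof (Kp k i) (k i))) := by
      nlinarith
    linarith
  have hub : ∀ n, N₂ ≤ n →
      Real.log (mu α (pref k n)) / Real.log (len (pref k n)) ≤ C := by
    intro n hn
    have hV := hVpos n (le_trans hN₂pos hn)
    have hsum : ∑ i ∈ Finset.range n, useq α k i ≤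
        C * ∑ i ∈ Finset.range n, vseq k i := by
      rw [Finset.mul_sum]
      exact Finset.sum_le_sum (fun i _ => hu_le i)
    rw [log_mu_eq hα12 hadm' n, log_len_eq hadm' n, neg_div_neg_eq,
      div_le_iff₀ hV]
    linarith
  -- conclude
  have hcb : IsCoboundedUnder (· ≥ ·) atTop (fun n : ℕ =>
      Real.log (mu α (pref k n)) / Real.log (len (pref k n))) :=
    isCoboundedUnder_ge_of_eventually_le atTop (eventually_atTop.2 ⟨N₂, hub⟩)
  refine le_trans (show α - ε ≤ α - ε₁ by linarith) ?_
  exact Filter.le_liminf_of_le hcb (eventually_atTop.2 ⟨N₂, hfbound⟩)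

end SchmelingStratmann
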